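/- Let Φ : ℝ^n → ℝ^n be a smooth diffeomorphism such that for every smooth metric g of Kundt shape the pullback Φ*g is again a smooth metric of Kundt shape. Then Φ is a shape transformation: there exist smooth functions C : ℝ → ℝ with C'(u) ≠ 0 for all u, A : ℝ × ℝ^{n-2} → ℝ^{n-2} with invertible x-Jacobian (∂A^i/∂x^j) at every point, and B : ℝ × ℝ^{n-2} → ℝ, such that Φ(u,x,v) = (C(u), A(u,x), v/C'(u) + B(u,x)) for all (u,x,v) (Theorem 1, converse direction). -/

import Mathlib

open Matrix

noncomputable section

/-- We work on `ℝ^(n+3)` (so the dimension is an arbitrary integer `≥ 3`), with coordinates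
`(u, x^1, …, x^{n+1}, v)`. Index of the coordinate `u`. -/
def uIdx (n : ℕ) : Fin (n + 3) := 0

/-- Index of the coordinate `v`. -/
def vIdx (n : ℕ) : Fin (n + 3) := Fin.last (n + 2)

/-- Index of the coordinate `x^i`. -/
def xIdx (n : ℕ) (i : Fin (n + 1)) : Fin (n + 3) := ⟨i.val + 1, by omega⟩

/-- Partial derivative of a scalar function `f` on `ℝ^(n+3)` in the `j`-th coordinate at `p`. -/
def partialDeriv' (n : ℕ) (f : (Fin (n + 3) → ℝ) → ℝ) (j : Fin (n + 3))
    (p : Fin (n + 3) → ℝ) : ℝ :=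
  deriv (fun t => f (Function.update p j t)) (p j)

/-- A smooth metric of Kundt shape on `ℝ^(n+3)`. -/
structure IsKundtShape (n : ℕ)
    (g : (Fin (n + 3) → ℝ) → Matrix (Fin (n + 3)) (Fin (n + 3)) ℝ) : Prop where
  smooth : ∀ i j, ContDiff ℝ (⊤ : ℕ∞) fun p => g p i j
  symm : ∀ p, (g p).IsSymm
  vv : ∀ p, g p (vIdx n) (vIdx n) = 0
  xv : ∀ p i, g p (xIdx n i) (vIdx n) = 0
  uv : ∀ p, g p (uIdx n) (vIdx n) = 1
  posDef : ∀ p, (Matrix.of fun i j : Fin (n + 1) => g p (xIdx n i) (xIdx n j)).PosDef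
  vIndep : ∀ p i j, partialDeriv' n (fun q => g q (xIdx n i) (xIdx n j)) (vIdx n) p = 0

/-- A shape transformation `φ(u,x,v) = (C(u), A(u,x), v/C'(u) + B(u,x))`. -/
def IsShapeTransform (n : ℕ) (φ : (Fin (n + 3) → ℝ) → Fin (n + 3) → ℝ) : Prop :=
  ∃ (C : ℝ → ℝ) (A : ℝ → (Fin (n + 1) → ℝ) → Fin (n + 1) → ℝ) (B : ℝ → (Fin (n + 1) → ℝ) → ℝ),
    ContDiff ℝ (⊤ : ℕ∞) C ∧
    (∀ i, ContDiff ℝ (⊤ : ℕ∞) fun q : ℝ × (Fin (n + 1) → ℝ) => A q.1 q.2 i) ∧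
    ContDiff ℝ (⊤ : ℕ∞) (fun q : ℝ × (Fin (n + 1) → ℝ) => B q.1 q.2) ∧
    (∀ u, deriv C u ≠ 0) ∧
    (∀ u x, IsUnit (Matrix.of fun i j : Fin (n + 1) =>
        deriv (fun t => A u (Function.update x j t) i) (x j))) ∧
    (∀ p, φ p (uIdx n) = C (p (uIdx n))) ∧
    (∀ p i, φ p (xIdx n i) = A (p (uIdx n)) (fun j => p (xIdx n j)) i) ∧
    (∀ p, φ p (vIdx n) =
      p (vIdx n) / deriv C (p (uIdx n)) + B (p (uIdx n)) (fun j => p (xIdx n j)))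

/-- The Jacobian matrix `Dφ_p` of `φ` at `p`. -/
def jacobianMatrix (n : ℕ) (φ : (Fin (n + 3) → ℝ) → Fin (n + 3) → ℝ)
    (p : Fin (n + 3) → ℝ) : Matrix (Fin (n + 3)) (Fin (n + 3)) ℝ :=
  Matrix.of fun i j => partialDeriv' n (fun q => φ q i) j p

/-- The pullback metric `(φ*g)(p) = (Dφ_p)ᵀ · g(φ(p)) · Dφ_p`. -/
def pullbackMetric (n : ℕ) (φ : (Fin (n + 3) → ℝ) → Fin (n + 3) → ℝ)
    (g : (Fin (n + 3) → ℝ) → Matrix (Fin (n + 3)) (Fin (n + 3)) ℝ)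
    (p : Fin (n + 3) → ℝ) : Matrix (Fin (n + 3)) (Fin (n + 3)) ℝ :=
  (jacobianMatrix n φ p)ᵀ * g (φ p) * jacobianMatrix n φ p

namespace KundtAux


variable {n : ℕ}

lemma uIdx_ne_vIdx : uIdx n ≠ vIdx n := by
  simp [uIdx, vIdx, Fin.ext_iff]
lemma xIdx_ne_uIdx (k : Fin (n+1)) : xIdx n k ≠ uIdx n := by
  intro h; have h' := congrArg Fin.val h; simp only [uIdx, xIdx, Fin.val_zero] at h'; omega
lemma xIdx_ne_vIdx (k : Fin (n+1)) : xIdx n k ≠ vIdx n := by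
  simp [vIdx, xIdx, Fin.ext_iff]; omega
lemma xIdx_inj {i j : Fin (n+1)} (h : xIdx n i = xIdx n j) : i = j := by
  simpa [xIdx, Fin.ext_iff] using h

lemma idx_cases (j : Fin (n+3)) : j = uIdx n ∨ j = vIdx n ∨ ∃ k, j = xIdx n k := by
  rcases j with ⟨jv, hj⟩
  by_cases h0 : jv = 0
  · exact Or.inl (by simp [uIdx, Fin.ext_iff, h0])
  by_cases hl : jv = n + 2
  · exact Or.inr (Or.inl (by simp [vIdx, Fin.ext_iff, hl]))
  · exact Or.inr (Or.inr ⟨⟨jv - 1, by omega⟩, by simp [xIdx, Fin.ext_iff]; omega⟩)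

lemma sum3 (f : Fin (n+3) → ℝ) :
    ∑ i, f i = f (uIdx n) + (∑ k : Fin (n+1), f (xIdx n k)) + f (vIdx n) := by
  rw [Fin.sum_univ_succ, Fin.sum_univ_castSucc]
  have h1 : ∀ k : Fin (n+1), Fin.succ (Fin.castSucc k) = xIdx n k := by
    intro k; simp [xIdx, Fin.ext_iff]
  have h2 : Fin.succ (Fin.last (n+1)) = vIdx n := by simp [vIdx, Fin.ext_iff]
  have h0 : (0 : Fin (n+3)) = uIdx n := rfl
  rw [h0, h2]
  simp only [h1]
  ring

/-- test metric -/
def Mmat (n : ℕ) (K : ℝ) : Matrix (Fin (n+3)) (Fin (n+3)) ℝ :=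
  Matrix.of fun i j =>
    if i = uIdx n ∧ j = uIdx n then K
    else if (i = uIdx n ∧ j = vIdx n) ∨ (i = vIdx n ∧ j = uIdx n) then 1
    else if i = vIdx n ∨ j = vIdx n then 0
    else if i = j then 1 else 0

lemma Mmat_uu (K : ℝ) : Mmat n K (uIdx n) (uIdx n) = K := by simp [Mmat]
lemma Mmat_uv (K : ℝ) : Mmat n K (uIdx n) (vIdx n) = 1 := by
  simp [Mmat, uIdx_ne_vIdx, (uIdx_ne_vIdx (n := n)).symm]
lemma Mmat_vu (K : ℝ) : Mmat n K (vIdx n) (uIdx n) = 1 := by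
  simp [Mmat, uIdx_ne_vIdx, (uIdx_ne_vIdx (n := n)).symm]
lemma Mmat_vv (K : ℝ) : Mmat n K (vIdx n) (vIdx n) = 0 := by
  simp [Mmat, (uIdx_ne_vIdx (n := n)).symm]
lemma Mmat_ux (K : ℝ) (k : Fin (n+1)) : Mmat n K (uIdx n) (xIdx n k) = 0 := by
  simp [Mmat, xIdx_ne_uIdx k, (xIdx_ne_uIdx k).symm, xIdx_ne_vIdx k, (xIdx_ne_vIdx k).symm, uIdx_ne_vIdx (n := n), (uIdx_ne_vIdx (n := n)).symm]
lemma Mmat_xu (K : ℝ) (k : Fin (n+1)) : Mmat n K (xIdx n k) (uIdx n) = 0 := by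
  simp [Mmat, xIdx_ne_uIdx k, (xIdx_ne_uIdx k).symm, xIdx_ne_vIdx k, (xIdx_ne_vIdx k).symm, uIdx_ne_vIdx (n := n), (uIdx_ne_vIdx (n := n)).symm]
lemma Mmat_xv (K : ℝ) (k : Fin (n+1)) : Mmat n K (xIdx n k) (vIdx n) = 0 := by
  simp [Mmat, xIdx_ne_uIdx k, (xIdx_ne_uIdx k).symm, xIdx_ne_vIdx k, (xIdx_ne_vIdx k).symm, uIdx_ne_vIdx (n := n), (uIdx_ne_vIdx (n := n)).symm]
lemma Mmat_vx (K : ℝ) (k : Fin (n+1)) : Mmat n K (vIdx n) (xIdx n k) = 0 := by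
  simp [Mmat, xIdx_ne_uIdx k, (xIdx_ne_uIdx k).symm, xIdx_ne_vIdx k, (xIdx_ne_vIdx k).symm, uIdx_ne_vIdx (n := n), (uIdx_ne_vIdx (n := n)).symm]
lemma Mmat_xx (K : ℝ) (i j : Fin (n+1)) :
    Mmat n K (xIdx n i) (xIdx n j) = if i = j then 1 else 0 := by
  simp only [Mmat, Matrix.of_apply]
  rw [if_neg, if_neg, if_neg]
  · by_cases h : i = j
    · simp [h]
    · rw [if_neg, if_neg h]; exact fun hh => h (xIdx_inj hh)
  · push_neg; exact ⟨xIdx_ne_vIdx i, xIdx_ne_vIdx j⟩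
  · push_neg
    refine ⟨fun h => absurd h (xIdx_ne_uIdx i), fun h => absurd h (xIdx_ne_vIdx i)⟩
  · rintro ⟨h, -⟩; exact xIdx_ne_uIdx i h


variable {n : ℕ}

/-- update as an affine curve -/
lemma update_eq_affine (p : Fin (n+3) → ℝ) (j : Fin (n+3)) (t : ℝ) :
    Function.update p j t = fun i => p i + (t - p j) * ((Pi.single j 1 : Fin (n+3) → ℝ) i) := by
  funext i
  by_cases h : i = j
  · subst h; simp
  · simp [Function.update_apply, h, Pi.single_apply]

lemma contDiff_update_curve (p : Fin (n+3) → ℝ) (j : Fin (n+3)) :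
    ContDiff ℝ (⊤ : ℕ∞) (fun t => Function.update p j t) := by
  have : (fun t => Function.update p j t)
      = fun t => (fun i => p i + (t - p j) * ((Pi.single j 1 : Fin (n+3) → ℝ) i)) := by
    funext t; exact update_eq_affine p j t
  rw [this]
  apply contDiff_pi.2
  intro i
  exact contDiff_const.add ((contDiff_id.sub contDiff_const).mul contDiff_const)

lemma diff_along (f : (Fin (n+3) → ℝ) → ℝ) (hf : ContDiff ℝ (⊤:ℕ∞) f)
    (p : Fin (n+3) → ℝ) (j : Fin (n+3)) :
    Differentiable ℝ (fun t => f (Function.update p j t)) :=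
  (hf.comp (contDiff_update_curve p j)).differentiable (by simp)

lemma deriv_along (f : (Fin (n+3) → ℝ) → ℝ) (j : Fin (n+3))
    (q : Fin (n+3) → ℝ) (t : ℝ) :
    deriv (fun s => f (Function.update q j s)) t
      = partialDeriv' n f j (Function.update q j t) := by
  unfold partialDeriv'
  rw [Function.update_self]
  congr 1
  funext s
  rw [Function.update_idem]

/-- If all partials of `f` in directions in `S` vanish, `f` only depends on the other coords. -/
lemma const_on (f : (Fin (n+3) → ℝ) → ℝ) (hf : ContDiff ℝ (⊤:ℕ∞) f)
    (S : Set (Fin (n+3)))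
    (hS : ∀ j ∈ S, ∀ q, partialDeriv' n f j q = 0)
    (p q : Fin (n+3) → ℝ) (hpq : ∀ j ∉ S, p j = q j) : f p = f q := by
  have key : ∀ s : Finset (Fin (n+3)),
      f (fun j => if j ∈ s then q j else p j) = f p := by
    intro s
    induction s using Finset.induction_on with
    | empty => simp
    | @insert a s ha ih =>
      set old : Fin (n+3) → ℝ := fun j => if j ∈ s then q j else p j with hold
      have hupd : (fun j => if j ∈ insert a s then q j else p j)
          = Function.update old a (q a) := by
        funext j
        by_cases h : j = a
        · subst h; simp [hold, ha]
        · simp [Function.update_apply, h, hold, Finset.mem_insert]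
      rw [hupd]
      by_cases haS : a ∈ S
      · have hconst : ∀ t₁ t₂ : ℝ,
            f (Function.update old a t₁) = f (Function.update old a t₂) := by
          intro t₁ t₂
          apply is_const_of_deriv_eq_zero (diff_along f hf old a)
          intro t
          rw [deriv_along]
          exact hS a haS _
        have h1 : f (Function.update old a (q a)) = f (Function.update old a (old a)) :=
          hconst _ _
        rw [h1, Function.update_eq_self, ih]
      · have hpa : p a = q a := hpq a haS
        have : old a = q a := by simp [hold, ha, hpa]
        rw [← this, Function.update_eq_self, ih]
  have := key Finset.univ
  simpa using this.symm


set_option maxHeartbeats 1000000 in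
lemma isKundt_Mmat (K : ℝ) : IsKundtShape n (fun _ => Mmat n K) where
  smooth := fun i j => contDiff_const
  symm := by
    intro p
    rw [Matrix.IsSymm]
    ext i j
    simp only [Matrix.transpose_apply, Mmat, Matrix.of_apply]
    split_ifs <;> tauto
  vv := fun p => Mmat_vv K
  xv := fun p i => Mmat_xv K i
  uv := fun p => Mmat_uv K
  posDef := by
    intro p
    have : (Matrix.of fun i j : Fin (n + 1) => Mmat n K (xIdx n i) (xIdx n j))
        = (1 : Matrix (Fin (n+1)) (Fin (n+1)) ℝ) := by
      ext i j
      rw [Matrix.of_apply, Mmat_xx, Matrix.one_apply]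
    rw [this]
    exact Matrix.PosDef.one
  vIndep := by
    intro p i j
    simp [partialDeriv']

/-- The key entry formula for the pullback of the test metric. -/
lemma pullback_entry (Φ : (Fin (n + 3) → ℝ) → Fin (n + 3) → ℝ) (K : ℝ)
    (p : Fin (n+3) → ℝ) (a b : Fin (n+3)) :
    pullbackMetric n Φ (fun _ => Mmat n K) p a b =
      K * jacobianMatrix n Φ p (uIdx n) a * jacobianMatrix n Φ p (uIdx n) b
      + jacobianMatrix n Φ p (uIdx n) a * jacobianMatrix n Φ p (vIdx n) b
      + jacobianMatrix n Φ p (vIdx n) a * jacobianMatrix n Φ p (uIdx n) b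
      + ∑ k : Fin (n+1), jacobianMatrix n Φ p (xIdx n k) a * jacobianMatrix n Φ p (xIdx n k) b := by
  set J := jacobianMatrix n Φ p with hJ
  show (Jᵀ * Mmat n K * J) a b = _
  rw [Matrix.mul_apply]
  rw [sum3 (fun j => (Jᵀ * Mmat n K) a j * J j b)]
  have inner : ∀ j, (Jᵀ * Mmat n K) a j = ∑ i, J i a * Mmat n K i j := by
    intro j
    rw [Matrix.mul_apply]
    simp [Matrix.transpose_apply]
  have Qu : (Jᵀ * Mmat n K) a (uIdx n) = J (uIdx n) a * K + J (vIdx n) a := by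
    rw [inner, sum3 (fun i => J i a * Mmat n K i (uIdx n))]
    simp [Mmat_uu, Mmat_vu, Mmat_xu]
  have Qv : (Jᵀ * Mmat n K) a (vIdx n) = J (uIdx n) a := by
    rw [inner, sum3 (fun i => J i a * Mmat n K i (vIdx n))]
    simp [Mmat_uv, Mmat_vv, Mmat_xv]
  have Qx : ∀ m : Fin (n+1), (Jᵀ * Mmat n K) a (xIdx n m) = J (xIdx n m) a := by
    intro m
    rw [inner, sum3 (fun i => J i a * Mmat n K i (xIdx n m))]
    simp [Mmat_ux, Mmat_vx, Mmat_xx, Finset.sum_ite_eq, mul_ite]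
  rw [Qu, Qv]
  simp only [Qx]
  ring

/-- The embedding `(u,x,v) ↦ (u, x¹, …, xⁿ⁺¹, v)`. -/
def emb (n : ℕ) (u : ℝ) (x : Fin (n+1) → ℝ) (v : ℝ) : Fin (n+3) → ℝ :=
  Fin.cons u (Fin.snoc x v)

lemma xIdx_eq_succ (k : Fin (n+1)) : xIdx n k = Fin.succ (Fin.castSucc k) := by
  simp [xIdx, Fin.ext_iff]

lemma vIdx_eq_succ : vIdx n = Fin.succ (Fin.last (n+1)) := by
  simp [vIdx, Fin.ext_iff]

@[simp] lemma emb_u (u : ℝ) (x : Fin (n+1) → ℝ) (v : ℝ) : emb n u x v (uIdx n) = u := rfl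

@[simp] lemma emb_x (u : ℝ) (x : Fin (n+1) → ℝ) (v : ℝ) (k : Fin (n+1)) :
    emb n u x v (xIdx n k) = x k := by
  rw [xIdx_eq_succ, emb, Fin.cons_succ, Fin.snoc_castSucc]

@[simp] lemma emb_v (u : ℝ) (x : Fin (n+1) → ℝ) (v : ℝ) : emb n u x v (vIdx n) = v := by
  rw [vIdx_eq_succ, emb, Fin.cons_succ, Fin.snoc_last]

lemma emb_eq_self (p : Fin (n+3) → ℝ) :
    emb n (p (uIdx n)) (fun k => p (xIdx n k)) (p (vIdx n)) = p := by
  funext j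
  rcases idx_cases j with h | h | ⟨k, h⟩ <;> subst h <;> simp

lemma update_u_emb (u : ℝ) (x : Fin (n+1) → ℝ) (v t : ℝ) :
    Function.update (emb n u x v) (uIdx n) t = emb n t x v := by
  funext j
  rcases idx_cases j with h | h | ⟨k, h⟩ <;> subst h <;>
    simp [Function.update_apply, (uIdx_ne_vIdx (n := n)).symm, xIdx_ne_uIdx]

lemma update_v_emb (u : ℝ) (x : Fin (n+1) → ℝ) (v t : ℝ) :
    Function.update (emb n u x v) (vIdx n) t = emb n u x t := by
  funext j
  rcases idx_cases j with h | h | ⟨k, h⟩ <;> subst h <;>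
    simp [Function.update_apply, uIdx_ne_vIdx (n := n), xIdx_ne_vIdx]

lemma update_x_emb (u : ℝ) (x : Fin (n+1) → ℝ) (v t : ℝ) (j : Fin (n+1)) :
    Function.update (emb n u x v) (xIdx n j) t = emb n u (Function.update x j t) v := by
  funext i
  rcases idx_cases i with h | h | ⟨k, h⟩ <;> subst h
  · simp [Function.update_apply, (xIdx_ne_uIdx j).symm]
  · simp [Function.update_apply, (xIdx_ne_vIdx j).symm]
  · by_cases hk : k = j
    · subst hk; simp
    · rw [Function.update_of_ne (fun hh => hk (xIdx_inj hh)), emb_x, emb_x,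
        Function.update_of_ne hk]

lemma embSmooth : ContDiff ℝ (⊤ : ℕ∞) (fun q : ℝ × (Fin (n+1) → ℝ) => emb n q.1 q.2 0) := by
  apply contDiff_pi.2
  intro j
  induction j using Fin.cases with
  | zero => simpa [emb] using contDiff_fst
  | succ k =>
    simp only [emb, Fin.cons_succ]
    induction k using Fin.lastCases with
    | last => simpa [Fin.snoc_last] using contDiff_const
    | cast i => simpa [Fin.snoc_castSucc] using contDiff_pi.mp contDiff_snd i

end KundtAux

open KundtAux

/-- **Theorem 1 (converse direction).** A smooth diffeomorphism of `ℝ^(n+3)` that maps every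
smooth metric of Kundt shape to a smooth metric of Kundt shape under pullback is a shape
transformation. -/
theorem kundtShape_preserving_diffeo_isShapeTransform (n : ℕ)
    (Φ : (Fin (n + 3) → ℝ) → Fin (n + 3) → ℝ)
    (hΦ : ContDiff ℝ (⊤ : ℕ∞) Φ)
    (hdiffeo : ∃ Ψ : (Fin (n + 3) → ℝ) → Fin (n + 3) → ℝ,
      ContDiff ℝ (⊤ : ℕ∞) Ψ ∧ Function.LeftInverse Ψ Φ ∧ Function.RightInverse Ψ Φ)
    (hpres : ∀ g : (Fin (n + 3) → ℝ) → Matrix (Fin (n + 3)) (Fin (n + 3)) ℝ,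
      IsKundtShape n g → IsKundtShape n (pullbackMetric n Φ g)) :
    IsShapeTransform n Φ := by
  classical
  clear hdiffeo
  have hcomp : ∀ i, ContDiff ℝ (⊤ : ℕ∞) (fun q => Φ q i) := fun i => contDiff_pi.mp hΦ i
  have h0 := hpres _ (isKundt_Mmat (n := n) 0)
  have h1 := hpres _ (isKundt_Mmat (n := n) 1)
  set J : (Fin (n+3) → ℝ) → Matrix (Fin (n+3)) (Fin (n+3)) ℝ := jacobianMatrix n Φ with hJdef
  have hJ : ∀ (p : Fin (n+3) → ℝ) i a, J p i a = partialDeriv' n (fun q => Φ q i) a p :=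
    fun p i a => rfl
  -- Step 1 : ∂ᵥ U = 0
  have hDUv : ∀ p, J p (uIdx n) (vIdx n) = 0 := by
    intro p
    have e0 := h0.vv p
    have e1 := h1.vv p
    rw [pullback_entry] at e0 e1
    rw [← hJdef] at e0 e1
    have : J p (uIdx n) (vIdx n) * J p (uIdx n) (vIdx n) = 0 := by linarith
    exact mul_self_eq_zero.mp this
  -- Step 2 : ∂ᵥ X = 0
  have hDXv : ∀ p k, J p (xIdx n k) (vIdx n) = 0 := by
    intro p k
    have e0 := h0.vv p
    rw [pullback_entry] at e0
    rw [← hJdef] at e0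
    rw [hDUv] at e0
    have hsum : ∑ m : Fin (n+1),
        J p (xIdx n m) (vIdx n) * J p (xIdx n m) (vIdx n) = 0 := by linarith
    have := (Finset.sum_eq_zero_iff_of_nonneg
      (fun i _ => mul_self_nonneg _)).mp hsum k (Finset.mem_univ k)
    exact mul_self_eq_zero.mp this
  -- Step 3 : ∂ᵤ U · ∂ᵥ V = 1
  have huv : ∀ p, J p (uIdx n) (uIdx n) * J p (vIdx n) (vIdx n) = 1 := by
    intro p
    have e := h0.uv p
    rw [pullback_entry] at e
    rw [← hJdef] at e
    simp only [hDUv, hDXv, mul_zero, zero_mul, add_zero, zero_add,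
      Finset.sum_const_zero] at e
    linarith
  have hJvv_ne : ∀ p, J p (vIdx n) (vIdx n) ≠ 0 :=
    fun p => right_ne_zero_of_mul_eq_one (huv p)
  -- Step 4 : ∂ₓ U = 0
  have hDUx : ∀ p i, J p (uIdx n) (xIdx n i) = 0 := by
    intro p i
    have e := h0.xv p i
    rw [pullback_entry] at e
    rw [← hJdef] at e
    simp only [hDUv, hDXv, mul_zero, zero_mul, add_zero, zero_add,
      Finset.sum_const_zero] at e
    rcases mul_eq_zero.mp e with h | h
    · exact h
    · exact absurd h (hJvv_ne p)
  -- the candidate C, A, B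
  set C : ℝ → ℝ := fun u => Φ (emb n u 0 0) (uIdx n) with hCdef
  set A : ℝ → (Fin (n+1) → ℝ) → Fin (n+1) → ℝ :=
    fun u x i => Φ (emb n u x 0) (xIdx n i) with hAdef
  set B : ℝ → (Fin (n+1) → ℝ) → ℝ := fun u x => Φ (emb n u x 0) (vIdx n) with hBdef
  -- U depends only on u
  have hU : ∀ p, Φ p (uIdx n) = C (p (uIdx n)) := by
    intro p
    have := const_on (fun q => Φ q (uIdx n)) (hcomp _) {j | j ≠ uIdx n}
      (by
        intro j hj q
        rcases idx_cases j with h | h | ⟨k, h⟩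
        · exact absurd h hj
        · subst h; exact hDUv q
        · subst h; exact hDUx q k)
      p (emb n (p (uIdx n)) 0 0)
      (by
        intro j hj
        have hju : j = uIdx n := not_not.mp hj
        subst hju
        simp)
    exact this
  -- ∂ᵤ U = C'
  have hderivC : ∀ q : Fin (n+3) → ℝ, J q (uIdx n) (uIdx n) = deriv C (q (uIdx n)) := by
    intro q
    have hfun : (fun t => Φ (Function.update q (uIdx n) t) (uIdx n)) = C := by
      funext t
      rw [hU, Function.update_self]
    show deriv (fun t => Φ (Function.update q (uIdx n) t) (uIdx n)) (q (uIdx n))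
      = deriv C (q (uIdx n))
    rw [hfun]
  have hC' : ∀ u0, deriv C u0 ≠ 0 := by
    intro u0
    have e := huv (emb n u0 0 0)
    rw [hderivC] at e
    simp only [emb_u] at e
    exact left_ne_zero_of_mul_eq_one e
  have hJvv_eq : ∀ q : Fin (n+3) → ℝ,
      J q (vIdx n) (vIdx n) = 1 / deriv C (q (uIdx n)) := by
    intro q
    have e := huv q
    rw [hderivC] at e
    rw [eq_div_iff (hC' _)]
    linarith [e]
  have hupdv : ∀ p : Fin (n+3) → ℝ,
      Function.update p (vIdx n) 0 = emb n (p (uIdx n)) (fun k => p (xIdx n k)) 0 := by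
    intro p
    conv_lhs => rw [← emb_eq_self (n := n) p]
    rw [update_v_emb]
  -- X depends only on (u, x)
  have hXid : ∀ p i, Φ p (xIdx n i) = A (p (uIdx n)) (fun j => p (xIdx n j)) i := by
    intro p i
    have := const_on (fun q => Φ q (xIdx n i)) (hcomp _) {vIdx n}
      (by
        intro j hj q
        rw [Set.mem_singleton_iff] at hj
        subst hj
        exact hDXv q i)
      p (Function.update p (vIdx n) 0)
      (by
        intro j hj
        rw [Set.mem_singleton_iff] at hj
        exact (Function.update_of_ne hj 0 p).symm)
    have h2 : Φ p (xIdx n i) = Φ (Function.update p (vIdx n) 0) (xIdx n i) := this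
    rw [h2, hupdv p]
  -- the V component
  have hVid : ∀ p, Φ p (vIdx n) =
      p (vIdx n) / deriv C (p (uIdx n)) + B (p (uIdx n)) (fun j => p (xIdx n j)) := by
    intro p
    set c := deriv C (p (uIdx n)) with hc
    have hdiff1 : Differentiable ℝ (fun t => Φ (Function.update p (vIdx n) t) (vIdx n)) :=
      diff_along _ (hcomp _) p _
    have hdiff2 : Differentiable ℝ (fun t : ℝ => t / c) := differentiable_id.div_const c
    have hderivh : ∀ t, deriv
        (fun t => Φ (Function.update p (vIdx n) t) (vIdx n) - t / c) t = 0 := by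
      intro t
      rw [deriv_fun_sub (hdiff1 t) (hdiff2 t),
        deriv_along (fun q => Φ q (vIdx n)) (vIdx n) p t, deriv_div_const, deriv_id'']
      have he : partialDeriv' n (fun q => Φ q (vIdx n)) (vIdx n)
          (Function.update p (vIdx n) t)
          = J (Function.update p (vIdx n) t) (vIdx n) (vIdx n) := rfl
      rw [he, hJvv_eq, Function.update_of_ne (uIdx_ne_vIdx (n := n))]
      simp [hc]
    have hconst := is_const_of_deriv_eq_zero (hdiff1.sub hdiff2) hderivh (p (vIdx n)) 0
    simp only [Pi.sub_apply, Function.update_eq_self, zero_div, sub_zero] at hconst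
    have hB : Φ (Function.update p (vIdx n) 0) (vIdx n)
        = B (p (uIdx n)) (fun j => p (xIdx n j)) := by
      rw [hupdv p]
    rw [hB] at hconst
    linarith
  -- invertibility of the x-Jacobian of A
  have hJacA : ∀ u0 x0, IsUnit (Matrix.of fun i j : Fin (n + 1) =>
      deriv (fun t => A u0 (Function.update x0 j t) i) (x0 j)) := by
    intro u0 x0
    set p := emb n u0 x0 0 with hp
    set G : Matrix (Fin (n+1)) (Fin (n+1)) ℝ :=
      Matrix.of fun i j => J p (xIdx n i) (xIdx n j) with hGdef
    have hGeq : (Matrix.of fun i j : Fin (n + 1) =>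
        deriv (fun t => A u0 (Function.update x0 j t) i) (x0 j)) = G := by
      ext i j
      show deriv (fun t => A u0 (Function.update x0 j t) i) (x0 j)
        = deriv (fun t => Φ (Function.update p (xIdx n j) t) (xIdx n i)) (p (xIdx n j))
      have harg : (fun t => A u0 (Function.update x0 j t) i)
          = fun t => Φ (Function.update p (xIdx n j) t) (xIdx n i) := by
        funext t
        rw [hp, update_x_emb]
      rw [harg, hp, emb_x]
    rw [hGeq]
    have hblock : (Matrix.of fun i j : Fin (n + 1) =>
        pullbackMetric n Φ (fun _ => Mmat n 0) p (xIdx n i) (xIdx n j)) = Gᵀ * G := by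
      ext i j
      rw [Matrix.of_apply, pullback_entry]
      rw [← hJdef]
      rw [hDUx, hDUx, Matrix.mul_apply]
      simp only [Matrix.transpose_apply, hGdef, Matrix.of_apply]
      ring
    have hpd := h0.posDef p
    rw [hblock] at hpd
    have hdet := hpd.det_pos
    rw [Matrix.det_mul, Matrix.det_transpose] at hdet
    rw [Matrix.isUnit_iff_isUnit_det]
    refine isUnit_iff_ne_zero.2 fun hz => ?_
    rw [hz] at hdet
    simp at hdet
  -- smoothness
  have hembC : ContDiff ℝ (⊤ : ℕ∞) (fun u : ℝ => emb n u (0 : Fin (n+1) → ℝ) 0) :=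
    (embSmooth (n := n)).comp (contDiff_id.prodMk contDiff_const)
  have hCs : ContDiff ℝ (⊤ : ℕ∞) C := (hcomp (uIdx n)).comp hembC
  have hAs : ∀ i, ContDiff ℝ (⊤ : ℕ∞) fun q : ℝ × (Fin (n + 1) → ℝ) => A q.1 q.2 i :=
    fun i => (hcomp (xIdx n i)).comp (embSmooth (n := n))
  have hBs : ContDiff ℝ (⊤ : ℕ∞) fun q : ℝ × (Fin (n + 1) → ℝ) => B q.1 q.2 :=
    (hcomp (vIdx n)).comp (embSmooth (n := n))
  exact ⟨C, A, B, hCs, hAs, hBs, hC', hJacA, hU, hXid, hVid⟩
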